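/- For all A ∈ B(H), B ∈ B(K) and every C ∈ B(K,H): σ_FLI(A) ∪ σ_FLI(B) = σ_FLI(M_C) ∪ W, where W = {λ ∈ ρ_l(A) ∩ ρ_SF−(B) : dim ker(B−λ) = dim coker(A−λ) = ∞} ∪ {λ ∈ ρ_l(A) ∩ ρ_SF−(B) : 0 < dim ker(B−λ) ≤ dim coker(A−λ) < ∞}. -/

import Mathlib

open ContinuousLinearMap Cardinal

noncomputable section

universe u

/-- nullity: dimension of the kernel, as a cardinal -/
def alphaDim {E F : Type u} [NormedAddCommGroup E] [NormedSpace ℂ E]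
    [NormedAddCommGroup F] [NormedSpace ℂ F] (T : E →L[ℂ] F) : Cardinal :=
  Module.rank ℂ (LinearMap.ker (T : E →ₗ[ℂ] F))

/-- deficiency: dimension of the cokernel, as a cardinal -/
def betaDim {E F : Type u} [NormedAddCommGroup E] [NormedSpace ℂ E]
    [NormedAddCommGroup F] [NormedSpace ℂ F] (T : E →L[ℂ] F) : Cardinal :=
  Module.rank ℂ (F ⧸ LinearMap.range (T : E →ₗ[ℂ] F))

/-- the upper triangular operator matrix [[A, C],[0, B]] acting on H ⊕ K -/
def MC {H K : Type u} [NormedAddCommGroup H] [NormedSpace ℂ H]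
    [NormedAddCommGroup K] [NormedSpace ℂ K]
    (A : H →L[ℂ] H) (B : K →L[ℂ] K) (C : K →L[ℂ] H) : (H × K) →L[ℂ] (H × K) :=
  (A.comp (fst ℂ H K) + C.comp (snd ℂ H K)).prod (B.comp (snd ℂ H K))

/-- T - λ -/
def shf {E : Type u} [NormedAddCommGroup E] [NormedSpace ℂ E]
    (T : E →L[ℂ] E) (l : ℂ) : E →L[ℂ] E := T - l • ContinuousLinearMap.id ℂ E

/-- Fredholm left invertible spectrum -/
def sigmaFLI {E : Type u} [NormedAddCommGroup E] [NormedSpace ℂ E]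
    (T : E →L[ℂ] E) : Set ℂ :=
  {l | ¬ (Function.Injective (shf T l) ∧ betaDim (shf T l) < ℵ₀)}

/-- Fredholm right invertible spectrum -/
def sigmaFRI {E : Type u} [NormedAddCommGroup E] [NormedSpace ℂ E]
    (T : E →L[ℂ] E) : Set ℂ :=
  {l | ¬ (Function.Surjective (shf T l) ∧ alphaDim (shf T l) < ℵ₀)}

/-- polynomially convex hull: the set together with the bounded components of its complement -/
def polyHull (S : Set ℂ) : Set ℂ :=
  S ∪ {z | z ∉ S ∧ Bornology.IsBounded (connectedComponentIn Sᶜ z)}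

section Alg
variable {H K : Type u} [NormedAddCommGroup H] [NormedSpace ℂ H]
  [NormedAddCommGroup K] [NormedSpace ℂ K]

variable (A : H →L[ℂ] H) (B : K →L[ℂ] K) (C : K →L[ℂ] H)

lemma MC_apply (x : H) (y : K) : MC A B C (x, y) = (A x + C y, B y) := rfl

lemma MC_inj (hA : Function.Injective A) (hB : Function.Injective B) :
    Function.Injective (MC A B C) := by
  refine (LinearMap.ker_eq_bot (f := (MC A B C : (H × K) →ₗ[ℂ] (H × K)))).mp ?_
  rw [Submodule.eq_bot_iff]
  rintro ⟨x, y⟩ h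
  have h' : (A x + C y, B y) = (0, 0) := h
  have hy : y = 0 := hB (by simpa using congrArg Prod.snd h')
  have hx : x = 0 := hA (by
    have := congrArg Prod.fst h'
    simp only [hy, map_zero, add_zero] at this
    simpa using this)
  simp [hx, hy]

/-- β(B) ≤ β(M) -/
lemma beta_B_le : Module.rank ℂ (K ⧸ LinearMap.range (B : K →ₗ[ℂ] K)) ≤
    Module.rank ℂ ((H × K) ⧸ LinearMap.range ((MC A B C) : (H × K) →ₗ[ℂ] (H × K))) := by
  have hle : LinearMap.range ((MC A B C) : (H × K) →ₗ[ℂ] (H × K)) ≤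
      Submodule.comap (LinearMap.snd ℂ H K) (LinearMap.range (B : K →ₗ[ℂ] K)) := by
    rintro _ ⟨⟨x, y⟩, rfl⟩
    exact ⟨y, rfl⟩
  refine LinearMap.rank_le_of_surjective
    (Submodule.mapQ _ _ (LinearMap.snd ℂ H K) hle) ?_
  intro z
  obtain ⟨v, rfl⟩ := Submodule.Quotient.mk_surjective _ z
  exact ⟨Submodule.Quotient.mk (0, v), by rw [Submodule.mapQ_apply]; rfl⟩

/-- α(B) ≤ β(A) when M injective -/
lemma alpha_le_beta (hMinj : Function.Injective (MC A B C)) :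
    Module.rank ℂ (LinearMap.ker (B : K →ₗ[ℂ] K)) ≤ Module.rank ℂ (H ⧸ LinearMap.range (A : H →ₗ[ℂ] H)) := by
  refine LinearMap.rank_le_of_injective
    ((LinearMap.range (A : H →ₗ[ℂ] H)).mkQ ∘ₗ C.toLinearMap ∘ₗ (LinearMap.ker (B : K →ₗ[ℂ] K)).subtype) ?_
  rw [← LinearMap.ker_eq_bot, Submodule.eq_bot_iff]
  rintro ⟨y, hy⟩ h0
  have h0' : Submodule.Quotient.mk (C y) = (0 : H ⧸ LinearMap.range (A : H →ₗ[ℂ] H)) := h0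
  rw [Submodule.Quotient.mk_eq_zero] at h0'
  obtain ⟨x, hx⟩ := h0'
  have hM : MC A B C (-x, y) = MC A B C 0 := by
    rw [map_zero, MC_apply]
    rw [LinearMap.mem_ker] at hy
    simp only [ContinuousLinearMap.coe_coe] at hx hy; simp [hx, hy]
  have := hMinj hM
  have : y = 0 := by simpa using congrArg Prod.snd this
  exact Subtype.ext this

/-- β(M) ≤ β(A) + β(B) -/
lemma beta_M_le : Module.rank ℂ ((H × K) ⧸ LinearMap.range ((MC A B C) : (H × K) →ₗ[ℂ] (H × K))) ≤
    Module.rank ℂ (H ⧸ LinearMap.range (A : H →ₗ[ℂ] H)) + Module.rank ℂ (K ⧸ LinearMap.range (B : K →ₗ[ℂ] K)) := by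
  set M := MC A B C with hMdef
  set Q := (H × K) ⧸ LinearMap.range (M : (H × K) →ₗ[ℂ] (H × K))
  let f : H →ₗ[ℂ] Q := (LinearMap.range (M : (H × K) →ₗ[ℂ] (H × K))).mkQ ∘ₗ LinearMap.inl ℂ H K
  have hf : ∀ u : H, f u = Submodule.Quotient.mk (u, 0) := fun u => rfl
  have key := Submodule.rank_quotient_add_rank (LinearMap.range f)
  -- rank (range f) ≤ β(A)
  have h1 : Module.rank ℂ (LinearMap.range f) ≤ Module.rank ℂ (H ⧸ LinearMap.range (A : H →ₗ[ℂ] H)) := by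
    have hle : LinearMap.range (A : H →ₗ[ℂ] H) ≤ LinearMap.ker f := by
      rintro _ ⟨x, rfl⟩
      rw [LinearMap.mem_ker, hf, Submodule.Quotient.mk_eq_zero]
      exact ⟨(x, 0), by rw [ContinuousLinearMap.coe_coe, MC_apply]; simp⟩
    have hrg : LinearMap.range ((LinearMap.range (A : H →ₗ[ℂ] H)).liftQ f hle) = LinearMap.range f :=
      Submodule.range_liftQ _ _ _
    calc Module.rank ℂ (LinearMap.range f)
        = Module.rank ℂ (LinearMap.range ((LinearMap.range (A : H →ₗ[ℂ] H)).liftQ f hle)) := by rw [hrg]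
      _ ≤ Module.rank ℂ (H ⧸ LinearMap.range (A : H →ₗ[ℂ] H)) := LinearMap.rank_le_domain _
  -- rank (Q ⧸ range f) ≤ β(B)
  have h2 : Module.rank ℂ (Q ⧸ LinearMap.range f) ≤
      Module.rank ℂ (K ⧸ LinearMap.range (B : K →ₗ[ℂ] K)) := by
    let h : K →ₗ[ℂ] Q ⧸ LinearMap.range f :=
      (LinearMap.range f).mkQ ∘ₗ (LinearMap.range (M : (H × K) →ₗ[ℂ] (H × K))).mkQ ∘ₗ LinearMap.inr ℂ H K
    have hh : ∀ v : K, h v =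
        Submodule.Quotient.mk (Submodule.Quotient.mk (0, v)) := fun v => rfl
    have hle2 : LinearMap.range (B : K →ₗ[ℂ] K) ≤ LinearMap.ker h := by
      rintro _ ⟨y, rfl⟩
      rw [LinearMap.mem_ker, hh]
      have e1 : (Submodule.Quotient.mk ((0 : H), B y) : Q) =
          Submodule.Quotient.mk (-(C y, (0 : K))) := by
        rw [Submodule.Quotient.eq]
        exact ⟨(0, y), by rw [ContinuousLinearMap.coe_coe, MC_apply]; simp [Prod.ext_iff]⟩
      rw [ContinuousLinearMap.coe_coe, e1, Submodule.Quotient.mk_eq_zero]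
      rw [show (Submodule.Quotient.mk (-(C y, (0:K))) : Q) = -(f (C y)) by
        rw [hf, ← Submodule.Quotient.mk_neg]]
      exact neg_mem ⟨C y, rfl⟩
    have hsurj : Function.Surjective ((LinearMap.range (B : K →ₗ[ℂ] K)).liftQ h hle2) := by
      intro z
      obtain ⟨q, rfl⟩ := Submodule.Quotient.mk_surjective _ z
      obtain ⟨⟨u, v⟩, rfl⟩ := Submodule.Quotient.mk_surjective _ q
      refine ⟨Submodule.Quotient.mk v, ?_⟩
      rw [Submodule.liftQ_apply, hh, Submodule.Quotient.eq]
      exact ⟨-u, by rw [hf, ← Submodule.Quotient.mk_sub]; congr 1; simp [Prod.ext_iff]⟩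
    exact LinearMap.rank_le_of_surjective _ hsurj
  calc Module.rank ℂ Q = Module.rank ℂ (Q ⧸ LinearMap.range f) +
        Module.rank ℂ (LinearMap.range f) := key.symm
    _ ≤ Module.rank ℂ (K ⧸ LinearMap.range (B : K →ₗ[ℂ] K)) + Module.rank ℂ (H ⧸ LinearMap.range (A : H →ₗ[ℂ] H)) :=
        add_le_add h2 h1
    _ = _ := add_comm _ _

/-- β(A) ≤ β(M) + α(B) -/
lemma beta_A_le : Module.rank ℂ (H ⧸ LinearMap.range (A : H →ₗ[ℂ] H)) ≤
    Module.rank ℂ ((H × K) ⧸ LinearMap.range ((MC A B C) : (H × K) →ₗ[ℂ] (H × K))) +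
      Module.rank ℂ (LinearMap.ker (B : K →ₗ[ℂ] K)) := by
  set M := MC A B C with hMdef
  set q : Submodule ℂ H := LinearMap.range (A : H →ₗ[ℂ] H) ⊔
    Submodule.map C.toLinearMap (LinearMap.ker (B : K →ₗ[ℂ] K)) with hq
  have hAq : LinearMap.range (A : H →ₗ[ℂ] H) ≤ q := le_sup_left
  set q' : Submodule ℂ (H ⧸ LinearMap.range (A : H →ₗ[ℂ] H)) := Submodule.map (LinearMap.range (A : H →ₗ[ℂ] H)).mkQ q
    with hq'
  have key := Submodule.rank_quotient_add_rank q'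
  -- rank ((H⧸ranA)⧸q') = rank (H⧸q) ≤ β(M)
  have h1 : Module.rank ℂ ((H ⧸ LinearMap.range (A : H →ₗ[ℂ] H)) ⧸ q') ≤
      Module.rank ℂ ((H × K) ⧸ LinearMap.range (M : (H × K) →ₗ[ℂ] (H × K))) := by
    have e1 := Submodule.quotientQuotientEquivQuotient (LinearMap.range (A : H →ₗ[ℂ] H)) q hAq
    rw [e1.rank_eq]
    have hle : q ≤ LinearMap.ker ((LinearMap.range (M : (H × K) →ₗ[ℂ] (H × K))).mkQ ∘ₗ LinearMap.inl ℂ H K) := by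
      refine sup_le ?_ ?_
      · rintro _ ⟨x, rfl⟩
        rw [LinearMap.mem_ker]
        show (Submodule.Quotient.mk (A x, (0:K)) : _) = 0
        rw [Submodule.Quotient.mk_eq_zero]
        exact ⟨(x, 0), by rw [ContinuousLinearMap.coe_coe, MC_apply]; simp⟩
      · rintro _ ⟨y, hy, rfl⟩
        rw [LinearMap.mem_ker]
        show (Submodule.Quotient.mk (C.toLinearMap y, (0:K)) : _) = 0
        rw [Submodule.Quotient.mk_eq_zero]
        have hy' : B y = 0 := hy
        exact ⟨(0, y), by rw [ContinuousLinearMap.coe_coe, MC_apply]; simp [hy']⟩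
    refine LinearMap.rank_le_of_injective (q.liftQ _ hle) ?_
    rw [← LinearMap.ker_eq_bot, Submodule.eq_bot_iff]
    intro z hz
    obtain ⟨u, rfl⟩ := Submodule.Quotient.mk_surjective _ z
    rw [LinearMap.mem_ker, Submodule.liftQ_apply] at hz
    have hz' : (Submodule.Quotient.mk (u, (0:K)) : (H × K) ⧸ LinearMap.range (M : (H × K) →ₗ[ℂ] (H × K))) = 0 := hz
    rw [Submodule.Quotient.mk_eq_zero] at hz'
    obtain ⟨⟨x, y⟩, hxy⟩ := hz'
    rw [ContinuousLinearMap.coe_coe, MC_apply] at hxy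
    have hy : B y = 0 := by simpa using congrArg Prod.snd hxy
    have hu : A x + C y = u := by simpa using congrArg Prod.fst hxy
    rw [Submodule.Quotient.mk_eq_zero]
    rw [← hu]
    exact add_mem (hAq ⟨x, rfl⟩) (Submodule.mem_sup_right ⟨y, hy, rfl⟩)
  -- rank q' ≤ α(B)
  have h2 : Module.rank ℂ q' ≤ Module.rank ℂ (LinearMap.ker (B : K →ₗ[ℂ] K)) := by
    have e2 : q' = Submodule.map ((LinearMap.range (A : H →ₗ[ℂ] H)).mkQ ∘ₗ C.toLinearMap)
        (LinearMap.ker (B : K →ₗ[ℂ] K)) := by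
      rw [hq', hq, Submodule.map_sup, Submodule.map_comp]
      have : Submodule.map (LinearMap.range (A : H →ₗ[ℂ] H)).mkQ (LinearMap.range (A : H →ₗ[ℂ] H)) = ⊥ := by
        rw [Submodule.eq_bot_iff]
        rintro _ ⟨u, hu, rfl⟩
        rw [Submodule.mkQ_apply, Submodule.Quotient.mk_eq_zero]
        exact hu
      rw [this, bot_sup_eq]
    rw [e2]
    exact rank_map_le _ _
  calc Module.rank ℂ (H ⧸ LinearMap.range (A : H →ₗ[ℂ] H))
      = Module.rank ℂ ((H ⧸ LinearMap.range (A : H →ₗ[ℂ] H)) ⧸ q') + Module.rank ℂ q' := key.symm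
    _ ≤ _ := add_le_add h1 h2

end Alg
lemma exists_bound_of_finite_coker {E F : Type u} [NormedAddCommGroup E] [NormedSpace ℂ E]
    [CompleteSpace E] [NormedAddCommGroup F] [NormedSpace ℂ F] [CompleteSpace F]
    (T : E →L[ℂ] F) (hinj : Function.Injective T)
    (hfin : Module.rank ℂ (F ⧸ LinearMap.range (T : E →ₗ[ℂ] F)) < ℵ₀) :
    ∃ c : NNReal, ∀ x, ‖x‖ ≤ c * ‖T x‖ := by
  obtain ⟨S, hS⟩ := Submodule.exists_isCompl (LinearMap.range (T : E →ₗ[ℂ] F))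
  haveI : FiniteDimensional ℂ S := by
    have h : Module.rank ℂ S < ℵ₀ := by
      rw [← ((Submodule.quotientEquivOfIsCompl _ S hS).rank_eq)]
      exact hfin
    exact Module.rank_lt_aleph0_iff.mp h
  let Φ : (E × S) →L[ℂ] F := T.comp (fst ℂ E S) + S.subtypeL.comp (snd ℂ E S)
  have hΦ : ∀ p : E × S, Φ p = T p.1 + (p.2 : F) := fun p => rfl
  have hker : LinearMap.ker (Φ : (E × S) →ₗ[ℂ] F) = ⊥ := by
    rw [Submodule.eq_bot_iff]
    rintro ⟨x, s⟩ hp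
    have h1 : T x + (s : F) = 0 := hp
    have hmem : T x ∈ LinearMap.range (T : E →ₗ[ℂ] F) ⊓ S := by
      refine ⟨⟨x, rfl⟩, ?_⟩
      have : T x = -(s : F) := eq_neg_of_add_eq_zero_left h1
      rw [this]; exact neg_mem s.2
    rw [hS.inf_eq_bot, Submodule.mem_bot] at hmem
    have hx : x = 0 := hinj (by rw [hmem, map_zero])
    have hs : (s : F) = 0 := by rw [hx, map_zero, zero_add] at h1; exact h1
    exact Prod.ext hx (Subtype.ext hs)
  have hrange : LinearMap.range (Φ : (E × S) →ₗ[ℂ] F) = ⊤ := by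
    rw [Submodule.eq_top_iff']
    intro y
    obtain ⟨u, v, hu, hv, huv⟩ := Submodule.codisjoint_iff_exists_add_eq.mp hS.2 y
    obtain ⟨x, hx⟩ := hu
    exact ⟨(x, ⟨v, hv⟩), by simp only [ContinuousLinearMap.coe_coe] at hx; simp [hΦ, hx, huv]⟩
  let e := ContinuousLinearEquiv.ofBijective Φ hker hrange
  refine ⟨‖(e.symm : F →L[ℂ] E × S)‖₊, fun x => ?_⟩
  have h1 : ‖((x, 0) : E × S)‖ ≤ ‖(e.symm : F →L[ℂ] E × S)‖₊ * ‖e (x, 0)‖ := by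
    have := e.antilipschitz.le_mul_dist (x, (0 : S)) 0
    simpa [dist_eq_norm] using this
  have h2 : e ((x, (0 : S))) = T x := by
    show Φ (x, 0) = T x
    simp [hΦ]
  have h3 : ‖((x, 0) : E × S)‖ = ‖x‖ := by
    simp [Prod.norm_def]
  rw [h2, h3] at h1
  exact h1

section Key
variable {H K : Type u} [NormedAddCommGroup H] [NormedSpace ℂ H] [CompleteSpace H]
  [NormedAddCommGroup K] [NormedSpace ℂ K] [CompleteSpace K]

lemma key_iff (A : H →L[ℂ] H) (B : K →L[ℂ] K) (C : K →L[ℂ] H) :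
    ((Function.Injective A ∧ betaDim A < ℵ₀) ∧ (Function.Injective B ∧ betaDim B < ℵ₀)) ↔
    ((Function.Injective (MC A B C) ∧ betaDim (MC A B C) < ℵ₀) ∧
      ¬((Function.Injective A ∧ IsClosed (Set.range A)) ∧
          betaDim B < ℵ₀ ∧ ℵ₀ ≤ alphaDim B ∧ ℵ₀ ≤ betaDim A) ∧
      ¬((Function.Injective A ∧ IsClosed (Set.range A)) ∧
          betaDim B < ℵ₀ ∧ 0 < alphaDim B ∧ alphaDim B ≤ betaDim A ∧ betaDim A < ℵ₀)) := by
  constructor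
  · rintro ⟨⟨hAi, hAb⟩, hBi, hBb⟩
    have hα0 : alphaDim B = 0 := by
      have h : LinearMap.ker (B : K →ₗ[ℂ] K) = ⊥ := (LinearMap.ker_eq_bot (f := (B : K →ₗ[ℂ] K))).mpr hBi
      show Module.rank ℂ (LinearMap.ker (B : K →ₗ[ℂ] K)) = 0
      rw [h]
      exact rank_bot ℂ K
    refine ⟨⟨MC_inj A B C hAi hBi, ?_⟩, ?_, ?_⟩
    · exact lt_of_le_of_lt (beta_M_le A B C) (Cardinal.add_lt_aleph0 hAb hBb)
    · rintro ⟨_, _, _, h⟩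
      exact hAb.not_ge h
    · rintro ⟨_, _, h, _⟩
      rw [hα0] at h
      exact lt_irrefl 0 h
  · rintro ⟨⟨hMi, hMb⟩, hw1, hw2⟩
    obtain ⟨c, hc⟩ := exists_bound_of_finite_coker (MC A B C) hMi hMb
    have hbound : ∀ x : H, ‖x‖ ≤ c * ‖A x‖ := by
      intro x
      have h1 := hc (x, 0)
      have h2 : MC A B C (x, 0) = (A x, 0) := by rw [MC_apply]; simp
      rw [h2] at h1
      calc ‖x‖ ≤ ‖((x, 0) : H × K)‖ := by rw [Prod.norm_def]; exact le_max_left _ _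
        _ ≤ c * ‖((A x, 0) : H × K)‖ := h1
        _ = c * ‖A x‖ := by
            rw [Prod.norm_def]
            simp [max_eq_left (norm_nonneg _)]
    have hanti := A.antilipschitz_of_bound hbound
    have hAi : Function.Injective A := hanti.injective
    have hAcl : IsClosed (Set.range A) := hanti.isClosed_range A.uniformContinuous
    have hBb : betaDim B < ℵ₀ := lt_of_le_of_lt (beta_B_le A B C) hMb
    have hαβ : alphaDim B ≤ betaDim A := alpha_le_beta A B C hMi
    by_cases hAb : betaDim A < ℵ₀
    · have hα : ¬ (0 < alphaDim B) := fun h => hw2 ⟨⟨hAi, hAcl⟩, hBb, h, hαβ, hAb⟩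
      have hα0 : alphaDim B = 0 := le_zero_iff.mp (not_lt.mp hα)
      have hBi : Function.Injective B := by
        have h : LinearMap.ker (B : K →ₗ[ℂ] K) = ⊥ := Submodule.rank_eq_zero.mp hα0
        exact (LinearMap.ker_eq_bot (f := (B : K →ₗ[ℂ] K))).mp h
      exact ⟨⟨hAi, hAb⟩, hBi, hBb⟩
    · exfalso
      have h1 : ℵ₀ ≤ betaDim A := not_lt.mp hAb
      have hαfin : alphaDim B < ℵ₀ := not_le.mp (fun h => hw1 ⟨⟨hAi, hAcl⟩, hBb, h, h1⟩)
      exact hAb (lt_of_le_of_lt (beta_A_le A B C) (Cardinal.add_lt_aleph0 hMb hαfin))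

lemma shf_MC (A : H →L[ℂ] H) (B : K →L[ℂ] K) (C : K →L[ℂ] H) (l : ℂ) :
    shf (MC A B C) l = MC (shf A l) (shf B l) C := by
  apply ContinuousLinearMap.ext
  rintro ⟨x, y⟩
  show MC A B C (x, y) - l • ((x, y) : H × K) = MC (shf A l) (shf B l) C (x, y)
  rw [MC_apply, MC_apply]
  show (A x + C y, B y) - (l • x, l • y) = ((A x - l • x) + C y, B y - l • y)
  rw [Prod.mk_sub_mk]
  refine congrArg₂ Prod.mk ?_ rfl
  rw [add_sub_right_comm]

variable {H K : Type u}
  [NormedAddCommGroup H] [InnerProductSpace ℂ H] [CompleteSpace H]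
  [NormedAddCommGroup K] [InnerProductSpace ℂ K] [CompleteSpace K]

set_option maxHeartbeats 1000000 in
theorem stmt_18
  [TopologicalSpace.SeparableSpace H] [TopologicalSpace.SeparableSpace K]
    (hH : ¬ FiniteDimensional ℂ H) (hK : ¬ FiniteDimensional ℂ K)
    (A : H →L[ℂ] H) (B : K →L[ℂ] K) (C : K →L[ℂ] H) :
    sigmaFLI A ∪ sigmaFLI B = sigmaFLI (MC A B C) ∪
      ({l : ℂ | (Function.Injective (shf A l) ∧ IsClosed (Set.range (shf A l))) ∧
          betaDim (shf B l) < ℵ₀ ∧ ℵ₀ ≤ alphaDim (shf B l) ∧ ℵ₀ ≤ betaDim (shf A l)} ∪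
       {l : ℂ | (Function.Injective (shf A l) ∧ IsClosed (Set.range (shf A l))) ∧
          betaDim (shf B l) < ℵ₀ ∧ 0 < alphaDim (shf B l) ∧
          alphaDim (shf B l) ≤ betaDim (shf A l) ∧ betaDim (shf A l) < ℵ₀}) := by
  have hkey := fun l : ℂ => key_iff (shf A l) (shf B l) C
  ext l
  simp only [Set.mem_union, sigmaFLI, Set.mem_setOf_eq, shf_MC A B C l]
  have h := hkey l
  tauto
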